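/- Let G be a finite connected bridgeless graph (parallel edges allowed) with diameter d and maximum edge girth g*(G)=3, i.e. every edge of G either has a parallel edge or lies in a triangle. Then G admits a strong orientation whose diameter is at most 3d. -/

import Mathlib

/-- A multigraph: vertices `V`, edges `E`, each edge has two distinct endpoints. -/
structure Multigraph (V : Type*) (E : Type*) where
  ends : E → Sym2 V
  loopless : ∀ e, ¬ (ends e).IsDiag

namespace Multigraph

variable {V E : Type*}

/-- Adjacency in a multigraph: some edge joins `x` and `y`. -/
def Adjm (G : Multigraph V E) (x y : V) : Prop := ∃ e, G.ends e = s(x, y)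

/-- The underlying simple graph of a multigraph. -/
def toSimple (G : Multigraph V E) : SimpleGraph V where
  Adj x y := x ≠ y ∧ G.Adjm x y
  symm := by
    constructor
    rintro x y ⟨hne, e, he⟩
    exact ⟨hne.symm, e, he.trans (Sym2.eq_swap)⟩
  loopless := by constructor; rintro x ⟨hne, -⟩; exact hne rfl

/-- Distance between two vertices (length of a shortest path). -/
noncomputable def dist (G : Multigraph V E) (x y : V) : ℕ := G.toSimple.dist x y

/-- The diameter of a multigraph. -/
noncomputable def diam (G : Multigraph V E) : ℕ := sSup {n | ∃ x y, G.dist x y = n}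

/-- The multigraph obtained by deleting the edge `e₀`. -/
def deleteEdge (G : Multigraph V E) (e₀ : E) : Multigraph V {e : E // e ≠ e₀} where
  ends e := G.ends e.1
  loopless e := G.loopless e.1

/-- A (connected) multigraph is bridgeless if deleting any single edge leaves it connected. -/
def Bridgeless (G : Multigraph V E) : Prop :=
  ∀ e : E, ((G.deleteEdge e).toSimple).Connected

/-- Walks in a multigraph, recording the edges used. -/
inductive Walk (G : Multigraph V E) : V → V → Type _
  | nil {v : V} : Walk G v v
  | cons {x y z : V} (e : E) (he : G.ends e = s(x, y)) (p : Walk G y z) : Walk G x z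

namespace Walk

variable {G : Multigraph V E}

/-- The length (number of edges) of a walk. -/
def length : ∀ {x y : V}, G.Walk x y → ℕ
  | _, _, .nil => 0
  | _, _, .cons _ _ p => p.length + 1

/-- The list of edges of a walk. -/
def edges : ∀ {x y : V}, G.Walk x y → List E
  | _, _, .nil => []
  | _, _, .cons e _ p => e :: p.edges

/-- The list of vertices of a walk. -/
def support : ∀ {x y : V}, G.Walk x y → List V
  | x, _, .nil => [x]
  | x, _, .cons _ _ p => x :: p.support

/-- A closed walk is a cycle if its edges are distinct and its vertices
(other than the repeated base point) are distinct. -/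
def IsCycle {v : V} (p : G.Walk v v) : Prop :=
  p.edges.Nodup ∧ p.support.tail.Nodup ∧ 0 < p.length

end Walk

/-- The edge girth of `e`: the length of a shortest cycle containing `e`. -/
noncomputable def edgeGirth (G : Multigraph V E) (e : E) : ℕ :=
  sInf {n | ∃ (v : V) (p : G.Walk v v), p.IsCycle ∧ e ∈ p.edges ∧ p.length = n}

/-- The maximum edge girth `g*(G)`. -/
noncomputable def maxEdgeGirth (G : Multigraph V E) : ℕ :=
  sSup (Set.range fun e => G.edgeGirth e)

/-- An orientation of a multigraph: each edge is assigned a direction. -/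
structure Orientation (G : Multigraph V E) where
  dir : E → V × V
  compat : ∀ e, s((dir e).1, (dir e).2) = G.ends e

/-- Arcs of an orientation. -/
def Orientation.DAdj {G : Multigraph V E} (o : G.Orientation) (x y : V) : Prop :=
  ∃ e, o.dir e = (x, y)

/-- Directed distance in an orientation (`⊤` if unreachable). -/
noncomputable def Orientation.ddist {G : Multigraph V E} (o : G.Orientation) (x y : V) : ℕ∞ :=
  sInf {n : ℕ∞ | ∃ l : List V, List.Chain o.DAdj x l ∧
    (x :: l).getLast (List.cons_ne_nil x l) = y ∧ (l.length : ℕ∞) = n}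

/-- An orientation is strong if every vertex is reachable from every vertex by a directed path. -/
def Orientation.IsStrong {G : Multigraph V E} (o : G.Orientation) : Prop :=
  ∀ x y : V, o.ddist x y ≠ ⊤

/-- The diameter of an orientation. -/
noncomputable def Orientation.odiam {G : Multigraph V E} (o : G.Orientation) : ℕ∞ :=
  ⨆ (x : V) (y : V), o.ddist x y

end Multigraph


/- ********** Auxiliary development ********** -/

namespace Multigraph

open Classical

variable {V E : Type*}

/-- Arcs of a partial orientation `ρ` restricted to the edge set `S`. -/
def ArcOn (ρ : E → V × V) (S : Set E) (x y : V) : Prop := ∃ f ∈ S, ρ f = (x, y)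

/-- Directed path of length at most 2. -/
def Hop2 (ρ : E → V × V) (S : Set E) (x y : V) : Prop :=
  ArcOn ρ S x y ∨ ∃ z, ArcOn ρ S x z ∧ ArcOn ρ S z y

/-- Directed path of length at most 3. -/
def Hop3 (ρ : E → V × V) (S : Set E) (x y : V) : Prop :=
  Hop2 ρ S x y ∨ (∃ z, ArcOn ρ S x z ∧ Hop2 ρ S z y) ∨ (∃ z, Hop2 ρ S x z ∧ ArcOn ρ S z y)

lemma ArcOn.mono {ρ ρ' : E → V × V} {S T : Set E} (hST : S ⊆ T)
    (hρ : ∀ f ∈ S, ρ' f = ρ f) {x y : V} (h : ArcOn ρ S x y) : ArcOn ρ' T x y := by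
  obtain ⟨f, hf, hfd⟩ := h
  exact ⟨f, hST hf, (hρ f hf).trans hfd⟩

lemma Hop2.mono {ρ ρ' : E → V × V} {S T : Set E} (hST : S ⊆ T)
    (hρ : ∀ f ∈ S, ρ' f = ρ f) {x y : V} (h : Hop2 ρ S x y) : Hop2 ρ' T x y := by
  rcases h with h | ⟨z, h1, h2⟩
  · exact Or.inl (h.mono hST hρ)
  · exact Or.inr ⟨z, h1.mono hST hρ, h2.mono hST hρ⟩

lemma Hop3.mono {ρ ρ' : E → V × V} {S T : Set E} (hST : S ⊆ T)
    (hρ : ∀ f ∈ S, ρ' f = ρ f) {x y : V} (h : Hop3 ρ S x y) : Hop3 ρ' T x y := by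
  rcases h with h | ⟨z, h1, h2⟩ | ⟨z, h1, h2⟩
  · exact Or.inl (h.mono hST hρ)
  · exact Or.inr (Or.inl ⟨z, h1.mono hST hρ, h2.mono hST hρ⟩)
  · exact Or.inr (Or.inr ⟨z, h1.mono hST hρ, h2.mono hST hρ⟩)

lemma Hop2.hop3 {ρ : E → V × V} {S : Set E} {x y : V} (h : Hop2 ρ S x y) : Hop3 ρ S x y :=
  Or.inl h

lemma ArcOn.hop2 {ρ : E → V × V} {S : Set E} {x y : V} (h : ArcOn ρ S x y) : Hop2 ρ S x y :=
  Or.inl h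

/-- Triangle data for the edge `e`. -/
def TriData (G : Multigraph V E) (e f g : E) (a b c : V) : Prop :=
  e ≠ f ∧ e ≠ g ∧ f ≠ g ∧ G.ends e = s(a, b) ∧ G.ends f = s(b, c) ∧ G.ends g = s(c, a)

/-- `e` has a short cycle: a parallel edge or a triangle. -/
def HasSC (G : Multigraph V E) (e : E) : Prop :=
  (∃ e', e' ≠ e ∧ G.ends e' = G.ends e) ∨ ∃ f g a b c, G.TriData e f g a b c

lemma triData_swap {G : Multigraph V E} {e f g : E} {a b c : V}
    (h : G.TriData e f g a b c) : G.TriData e g f b a c := by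
  obtain ⟨h1, h2, h3, h4, h5, h6⟩ := h
  exact ⟨h2, h1, h3.symm, h4.trans Sym2.eq_swap, h6.trans Sym2.eq_swap,
    h5.trans Sym2.eq_swap⟩

end Multigraph


namespace Multigraph

variable {V E : Type*}

lemma sym2_cases (z : Sym2 V) : ∃ x y : V, z = s(x, y) := by
  induction z using Sym2.ind with
  | _ x y => exact ⟨x, y, rfl⟩

lemma prod_eq_of_sym2 {p : V × V} {x y : V} (h : s(p.1, p.2) = s(x, y)) :
    p = (x, y) ∨ p = (y, x) := by
  obtain ⟨p1, p2⟩ := p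
  rcases Sym2.eq_iff.1 h with ⟨h1, h2⟩ | ⟨h1, h2⟩
  · left; simp only [Prod.mk.injEq]; exact ⟨h1, h2⟩
  · right; simp only [Prod.mk.injEq]; exact ⟨h1, h2⟩

section Phase1

variable [Fintype V] [Fintype E]

/-- Phase 1: a maximal edge-disjoint family of cyclically oriented short cycles. -/
lemma phase1 (G : Multigraph V E) [Nonempty V] :
    ∃ (D : Finset E) (ρ : E → V × V),
      (∀ e ∈ D, s((ρ e).1, (ρ e).2) = G.ends e) ∧
      (∀ e ∈ D, Hop2 ρ ↑D (ρ e).2 (ρ e).1) ∧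
      (∀ e ∉ D, ∀ e', e' ≠ e → G.ends e' = G.ends e → e' ∈ D) ∧
      (∀ e ∉ D, ∀ f g a b c, G.TriData e f g a b c → f ∈ D ∨ g ∈ D) := by
  classical
  set Valid : Finset E → Prop := fun D => ∃ ρ : E → V × V,
    (∀ e ∈ D, s((ρ e).1, (ρ e).2) = G.ends e) ∧
    (∀ e ∈ D, Hop2 ρ ↑D (ρ e).2 (ρ e).1) with hValid
  have hne : (Finset.univ.powerset.filter Valid).Nonempty := by
    refine ⟨∅, ?_⟩
    simp only [Finset.mem_filter, Finset.mem_powerset]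
    refine ⟨Finset.empty_subset _, ?_⟩
    exact ⟨fun _ => (Classical.arbitrary V, Classical.arbitrary V), by simp, by simp⟩
  obtain ⟨D, hDmem, hDmax⟩ := Finset.exists_max_image _ Finset.card hne
  rw [Finset.mem_filter] at hDmem
  obtain ⟨-, ρ, hcompat, hhop2⟩ := hDmem
  refine ⟨D, ρ, hcompat, hhop2, ?_, ?_⟩
  · -- every parallel partner of an uncovered edge is covered
    intro e he e' hne' hends
    by_contra he'
    obtain ⟨x, y, hxy⟩ := sym2_cases (G.ends e)
    set ρ' : E → V × V := Function.update (Function.update ρ e (x, y)) e' (y, x) with hρ'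
    have hρe : ρ' e = (x, y) := by
      rw [hρ', Function.update_of_ne hne'.symm, Function.update_self]
    have hρe' : ρ' e' = (y, x) := by rw [hρ', Function.update_self]
    have hagree : ∀ f ∈ D, ρ' f = ρ f := by
      intro f hf
      rw [hρ', Function.update_of_ne (fun h => he' (by rwa [h] at hf)),
        Function.update_of_ne (fun h => he (by rwa [h] at hf))]
    set D' : Finset E := insert e (insert e' D) with hD'
    have hsub : D ⊆ D' := by intro f hf; simp [hD', hf]
    have hvalid : Valid D' := by
      refine ⟨ρ', ?_, ?_⟩
      · intro f hf
        rcases Finset.mem_insert.1 hf with rfl | hf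
        · rw [hρe, hxy]
        rcases Finset.mem_insert.1 hf with rfl | hf
        · rw [hρe', hends, hxy]; exact Sym2.eq_swap
        · rw [hagree f hf]; exact hcompat f hf
      · intro f hf
        rcases Finset.mem_insert.1 hf with rfl | hf'
        · rw [hρe]
          exact Or.inl ⟨e', by simp [hD'], hρe'⟩
        rcases Finset.mem_insert.1 hf' with rfl | hf''
        · rw [hρe']
          exact Or.inl ⟨e, by simp [hD'], hρe⟩
        · rw [hagree f hf'']
          exact (hhop2 f hf'').mono (by exact_mod_cast hsub) hagree
    have hcard : D.card < D'.card :=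
      Finset.card_lt_card ⟨hsub, fun h => he (h (by simp [hD']))⟩
    have hmem' : D' ∈ Finset.univ.powerset.filter Valid := by
      simp only [Finset.mem_filter, Finset.mem_powerset]
      exact ⟨Finset.subset_univ _, hvalid⟩
    have := hDmax D' hmem'
    omega
  · -- every triangle of an uncovered edge meets the covered set
    intro e he f g a b c htri
    by_contra hfg
    push_neg at hfg
    obtain ⟨hf, hg⟩ := hfg
    obtain ⟨hef, heg, hfgne, hends_e, hends_f, hends_g⟩ := htri
    set ρ' : E → V × V := Function.update (Function.update (Function.update ρ e (a, b))
      f (b, c)) g (c, a) with hρ'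
    have hρe : ρ' e = (a, b) := by
      rw [hρ', Function.update_of_ne heg, Function.update_of_ne hef, Function.update_self]
    have hρf : ρ' f = (b, c) := by
      rw [hρ', Function.update_of_ne hfgne, Function.update_self]
    have hρg : ρ' g = (c, a) := by rw [hρ', Function.update_self]
    have hagree : ∀ f' ∈ D, ρ' f' = ρ f' := by
      intro f' hf'
      rw [hρ', Function.update_of_ne (fun h => hg (by rwa [h] at hf')),
        Function.update_of_ne (fun h => hf (by rwa [h] at hf')),
        Function.update_of_ne (fun h => he (by rwa [h] at hf'))]
    set D' : Finset E := insert e (insert f (insert g D)) with hD'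
    have hsub : D ⊆ D' := by intro f' hf'; simp [hD', hf']
    have heD' : e ∈ D' := by simp [hD']
    have hfD' : f ∈ D' := by simp [hD']
    have hgD' : g ∈ D' := by simp [hD']
    have hvalid : Valid D' := by
      refine ⟨ρ', ?_, ?_⟩
      · intro f' hf'
        rcases Finset.mem_insert.1 hf' with rfl | hf'
        · rw [hρe]; exact hends_e.symm
        rcases Finset.mem_insert.1 hf' with rfl | hf'
        · rw [hρf]; exact hends_f.symm
        rcases Finset.mem_insert.1 hf' with rfl | hf'
        · rw [hρg]; exact hends_g.symm
        · rw [hagree f' hf']; exact hcompat f' hf'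
      · intro f' hf'
        rcases Finset.mem_insert.1 hf' with rfl | hf'
        · rw [hρe]
          exact Or.inr ⟨c, ⟨f, hfD', hρf⟩, ⟨g, hgD', hρg⟩⟩
        rcases Finset.mem_insert.1 hf' with rfl | hf'
        · rw [hρf]
          exact Or.inr ⟨a, ⟨g, hgD', hρg⟩, ⟨e, heD', hρe⟩⟩
        rcases Finset.mem_insert.1 hf' with rfl | hf'
        · rw [hρg]
          exact Or.inr ⟨b, ⟨e, heD', hρe⟩, ⟨f, hfD', hρf⟩⟩
        · rw [hagree f' hf']
          exact (hhop2 f' hf').mono (by exact_mod_cast hsub) hagree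
    have hcard : D.card < D'.card :=
      Finset.card_lt_card ⟨hsub, fun h => he (h heD')⟩
    have hmem' : D' ∈ Finset.univ.powerset.filter Valid := by
      simp only [Finset.mem_filter, Finset.mem_powerset]
      exact ⟨Finset.subset_univ _, hvalid⟩
    have := hDmax D' hmem'
    omega

end Phase1

end Multigraph

namespace Multigraph

section SC

variable {V E : Type*}

lemma exists_walk_avoiding {G : Multigraph V E} {e : E} {u w : V}
    (W : (G.deleteEdge e).toSimple.Walk u w) :
    ∃ q : G.Walk u w, q.support = W.support ∧ q.edges.map G.ends = W.edges ∧ e ∉ q.edges := by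
  induction W with
  | nil => exact ⟨Walk.nil, rfl, rfl, by simp [Walk.edges]⟩
  | @cons x y z h p ih =>
    obtain ⟨hne, f, hf⟩ := h
    obtain ⟨q, hsup, hedges, hnot⟩ := ih
    refine ⟨Walk.cons f.1 hf q, ?_, ?_, ?_⟩
    · simp only [Walk.support, SimpleGraph.Walk.support_cons, hsup]
      rfl
    · simp only [Walk.edges, SimpleGraph.Walk.edges_cons, List.map_cons, hedges,
        List.cons.injEq, and_true]
      show G.ends ↑f :: p.edges = s(x, y) :: p.edges
      exact congrArg (· :: p.edges) hf
    · intro hmem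
      rcases List.mem_cons.1 hmem with h1 | h1
      · exact f.2 h1.symm
      · exact hnot h1

lemma walk_length1 {G : Multigraph V E} {u w : V} (p : G.Walk u w) (h : p.length = 1) :
    ∃ e1, G.ends e1 = s(u, w) ∧ p.edges = [e1] := by
  cases p with
  | nil => simp [Walk.length] at h
  | cons e1 h1 p1 =>
    cases p1 with
    | nil => exact ⟨e1, h1, rfl⟩
    | cons e2 h2 p2 => simp [Walk.length] at h

lemma walk_length2 {G : Multigraph V E} {u w : V} (p : G.Walk u w) (h : p.length = 2) :
    ∃ z e1 e2, G.ends e1 = s(u, z) ∧ G.ends e2 = s(z, w) ∧ p.edges = [e1, e2] := by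
  cases p with
  | nil => simp [Walk.length] at h
  | @cons x y z e1 h1 p1 =>
    obtain ⟨e2, h2, hedges⟩ := walk_length1 p1 (by simp [Walk.length] at h ⊢; omega)
    exact ⟨_, e1, e2, h1, h2, by simp [Walk.edges, hedges]⟩

lemma walk_length3 {G : Multigraph V E} {u w : V} (p : G.Walk u w) (h : p.length = 3) :
    ∃ z1 z2 e1 e2 e3, G.ends e1 = s(u, z1) ∧ G.ends e2 = s(z1, z2) ∧ G.ends e3 = s(z2, w) ∧
      p.edges = [e1, e2, e3] := by
  cases p with
  | nil => simp [Walk.length] at h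
  | @cons x y z e1 h1 p1 =>
    obtain ⟨z2, e2, e3, h2, h3, hedges⟩ := walk_length2 p1 (by simp [Walk.length] at h ⊢; omega)
    exact ⟨_, z2, e1, e2, e3, h1, h2, h3, by simp [Walk.edges, hedges]⟩

/-- Every edge has a short cycle. -/
lemma hasSC_of_bridgeless {V E : Type*} [Fintype V] [Fintype E] (G : Multigraph V E)
    (hbridgeless : G.Bridgeless) (hg : G.maxEdgeGirth = 3) (e : E) : G.HasSC e := by
  classical
  -- the set of cycles through e is nonempty
  have hnonempty :
      {n | ∃ (v : V) (p : G.Walk v v), p.IsCycle ∧ e ∈ p.edges ∧ p.length = n}.Nonempty := by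
    obtain ⟨x, y, hxy⟩ := sym2_cases (G.ends e)
    obtain ⟨W0⟩ : (G.deleteEdge e).toSimple.Reachable y x := (hbridgeless e).preconnected y x
    have hWpath : W0.bypass.IsPath := SimpleGraph.Walk.bypass_isPath W0
    obtain ⟨q, hsup, hedges, hnot⟩ := exists_walk_avoiding W0.bypass
    refine ⟨(Walk.cons e hxy q).length, x, Walk.cons e hxy q, ⟨?_, ?_, ?_⟩, ?_, rfl⟩
    · -- edges nodup
      have hq : q.edges.Nodup := by
        have := hWpath.isTrail.edges_nodup
        rw [← hedges] at this
        exact this.of_map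
      simpa [Walk.edges, hnot] using hq
    · -- support tail nodup
      have : (Walk.cons e hxy q).support = x :: q.support := rfl
      rw [this]
      simp only [List.tail_cons]
      rw [hsup]
      exact hWpath.support_nodup
    · simp [Walk.length]
    · simp [Walk.edges]
  have hle : G.edgeGirth e ≤ 3 := by
    have hmem : G.edgeGirth e ∈ Set.range (fun e => G.edgeGirth e) := ⟨e, rfl⟩
    have hbdd : BddAbove (Set.range fun e => G.edgeGirth e) := (Set.finite_range _).bddAbove
    have := le_csSup hbdd hmem
    rwa [← maxEdgeGirth, hg] at this
  obtain ⟨v, p, hcyc, hmemp, hlen⟩ := Nat.sInf_mem hnonempty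
  obtain ⟨hnodup, hsupp, hpos⟩ := hcyc
  rw [edgeGirth, ← hlen] at hle
  have h123 : p.length = 1 ∨ p.length = 2 ∨ p.length = 3 := by omega
  rcases h123 with h | h | h
  · -- length 1: loop, contradiction
    obtain ⟨e1, he1, hedges⟩ := walk_length1 p h
    exact absurd (by rw [he1]; exact Sym2.mk_isDiag_iff.2 rfl) (G.loopless e1)
  · -- length 2: parallel edge
    obtain ⟨z, e1, e2, he1, he2, hedges⟩ := walk_length2 p h
    rw [hedges] at hmemp hnodup
    have hne : e1 ≠ e2 := by simpa using hnodup
    rcases List.mem_pair.1 hmemp with rfl | rfl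
    · exact Or.inl ⟨e2, hne.symm, by rw [he1, he2]; exact Sym2.eq_swap⟩
    · exact Or.inl ⟨e1, hne, by rw [he1, he2]; exact Sym2.eq_swap⟩
  · -- length 3: triangle
    obtain ⟨z1, z2, e1, e2, e3, he1, he2, he3, hedges⟩ := walk_length3 p h
    rw [hedges] at hmemp hnodup
    have h12 : e1 ≠ e2 := by simp at hnodup; tauto
    have h13 : e1 ≠ e3 := by simp at hnodup; tauto
    have h23 : e2 ≠ e3 := by simp at hnodup; tauto
    simp only [List.mem_cons, List.not_mem_nil, or_false] at hmemp
    rcases hmemp with rfl | rfl | rfl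
    · exact Or.inr ⟨e2, e3, v, z1, z2, h12, h13, h23, he1, he2, he3⟩
    · exact Or.inr ⟨e3, e1, z1, z2, v, h23, h12.symm, h13.symm, he2, he3, he1⟩
    · exact Or.inr ⟨e1, e2, z2, v, z1, h13.symm, h23.symm, h12, he3, he1, he2⟩

end SC

end Multigraph

namespace Multigraph

section Phase2

variable {V E : Type*} [DecidableEq E]

/-- The invariant carried through phase 2. -/
def Inv (G : Multigraph V E) (D S : Finset E) (ρ : E → V × V) : Prop :=
  (∀ e ∈ S, s((ρ e).1, (ρ e).2) = G.ends e) ∧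
  (∀ e ∈ D, Hop2 ρ ↑D (ρ e).2 (ρ e).1) ∧
  (∀ e ∈ S, Hop3 ρ ↑S (ρ e).2 (ρ e).1)

lemma extend_one {G : Multigraph V E} {D S : Finset E} {ρ : E → V × V}
    (hDS : D ⊆ S) (hinv : Inv G D S ρ) {e : E} (heS : e ∉ S) (p q : V)
    (hends : s(p, q) = G.ends e)
    (hback : Hop3 (Function.update ρ e (p, q)) ↑(insert e S) q p) :
    Inv G D (insert e S) (Function.update ρ e (p, q)) := by
  classical
  obtain ⟨hcompat, hhop2, hhop3⟩ := hinv
  have heD : e ∉ D := fun h => heS (hDS h)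
  have hagree : ∀ f ∈ S, Function.update ρ e (p, q) f = ρ f := fun f hf =>
    Function.update_of_ne (fun h => heS (by rwa [h] at hf)) _ _
  have hagreeD : ∀ f ∈ D, Function.update ρ e (p, q) f = ρ f := fun f hf =>
    hagree f (hDS hf)
  have hsub : (↑S : Set E) ⊆ ↑(insert e S) := by
    exact_mod_cast (Finset.subset_insert e S : S ⊆ insert e S)
  refine ⟨?_, ?_, ?_⟩
  · intro f hf
    rcases Finset.mem_insert.1 hf with rfl | hf
    · rw [Function.update_self]; exact hends
    · rw [hagree f hf]; exact hcompat f hf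
  · intro f hf
    rw [hagreeD f hf]
    exact (hhop2 f hf).mono subset_rfl hagreeD
  · intro f hf
    rcases Finset.mem_insert.1 hf with rfl | hf
    · rw [Function.update_self]; exact hback
    · rw [hagree f hf]
      exact (hhop3 f hf).mono hsub hagree

lemma extend_two {G : Multigraph V E} {D S : Finset E} {ρ : E → V × V}
    (hDS : D ⊆ S) (hinv : Inv G D S ρ) {e g : E} (heS : e ∉ S) (hgS : g ∉ S)
    (hge : g ≠ e) (p q r t : V)
    (hends : s(p, q) = G.ends e) (hends' : s(r, t) = G.ends g)
    (hback : Hop3 (Function.update (Function.update ρ e (p, q)) g (r, t))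
      ↑(insert e (insert g S)) q p)
    (hback' : Hop3 (Function.update (Function.update ρ e (p, q)) g (r, t))
      ↑(insert e (insert g S)) t r) :
    Inv G D (insert e (insert g S)) (Function.update (Function.update ρ e (p, q)) g (r, t)) := by
  classical
  set ρ' := Function.update (Function.update ρ e (p, q)) g (r, t) with hρ'
  obtain ⟨hcompat, hhop2, hhop3⟩ := hinv
  have hagree : ∀ f ∈ S, ρ' f = ρ f := fun f hf => by
    rw [hρ', Function.update_of_ne (fun h => hgS (by rwa [h] at hf)),
      Function.update_of_ne (fun h => heS (by rwa [h] at hf))]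
  have hagreeD : ∀ f ∈ D, ρ' f = ρ f := fun f hf => hagree f (hDS hf)
  have hρe : ρ' e = (p, q) := by
    rw [hρ', Function.update_of_ne hge.symm, Function.update_self]
  have hρg : ρ' g = (r, t) := by rw [hρ', Function.update_self]
  have hsub : (↑S : Set E) ⊆ ↑(insert e (insert g S)) := by
    intro f hf
    simp only [Finset.coe_insert, Set.mem_insert_iff]
    exact Or.inr (Or.inr hf)
  refine ⟨?_, ?_, ?_⟩
  · intro f hf
    rcases Finset.mem_insert.1 hf with rfl | hf
    · rw [hρe]; exact hends
    rcases Finset.mem_insert.1 hf with rfl | hf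
    · rw [hρg]; exact hends'
    · rw [hagree f hf]; exact hcompat f hf
  · intro f hf
    rw [hagreeD f hf]
    exact (hhop2 f hf).mono subset_rfl hagreeD
  · intro f hf
    rcases Finset.mem_insert.1 hf with rfl | hf
    · rw [hρe]; exact hback
    rcases Finset.mem_insert.1 hf with rfl | hf
    · rw [hρg]; exact hback'
    · rw [hagree f hf]
      exact (hhop3 f hf).mono hsub hagree

/-- Phase 2 core step when the covered mate is the edge `f` between `b` and `c`. -/
lemma phase2_step {G : Multigraph V E} {D S : Finset E} {ρ : E → V × V}
    {e f g : E} {a b c : V} (htri : G.TriData e f g a b c) (hfD : f ∈ D)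
    (hDS : D ⊆ S) (heS : e ∉ S) (hinv : Inv G D S ρ) :
    ∃ (S' : Finset E) (ρ' : E → V × V), S ⊆ S' ∧ e ∈ S' ∧ Inv G D S' ρ' := by
  classical
  obtain ⟨hef, heg, hfg, hends_e, hends_f, hends_g⟩ := htri
  obtain ⟨hcompat, hhop2, hhop3⟩ := hinv
  have hinv' : Inv G D S ρ := ⟨hcompat, hhop2, hhop3⟩
  have hfS : f ∈ S := hDS hfD
  have hfe : f ≠ e := fun h => heS (by rwa [h] at hfS)
  have hρf : ρ f = (b, c) ∨ ρ f = (c, b) := by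
    apply prod_eq_of_sym2
    rw [hcompat f hfS, hends_f]
  by_cases hgS : g ∈ S
  · -- g already oriented: orient only e
    have hge : g ≠ e := fun h => heS (by rwa [h] at hgS)
    have hρg : ρ g = (c, a) ∨ ρ g = (a, c) := by
      apply prod_eq_of_sym2
      rw [hcompat g hgS, hends_g]
    have hfmem : f ∈ insert e S := Finset.mem_insert_of_mem hfS
    have hgmem : g ∈ insert e S := Finset.mem_insert_of_mem hgS
    have hemem : e ∈ insert e S := Finset.mem_insert_self e S
    -- arcs of f and g survive the update
    have huf : ∀ v : V × V, Function.update ρ e v f = ρ f := fun v =>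
      Function.update_of_ne hfe _ _
    have hug : ∀ v : V × V, Function.update ρ e v g = ρ g := fun v =>
      Function.update_of_ne hge _ _
    have hsubD : (↑D : Set E) ⊆ ↑(insert e S) := by
      intro x hx
      simp only [Finset.coe_insert, Set.mem_insert_iff]
      exact Or.inr (hDS (by exact_mod_cast hx))
    have hagreeD : ∀ v : V × V, ∀ x ∈ D, Function.update ρ e v x = ρ x := fun v x hx =>
      Function.update_of_ne (fun h => heS (by rw [h] at hx; exact hDS hx)) _ _
    rcases hρf with hf1 | hf1 <;> rcases hρg with hg1 | hg1
    · -- f = (b,c), g = (c,a) : cyclic, e ↦ (a,b)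
      refine ⟨insert e S, _, Finset.subset_insert _ _, hemem,
        extend_one hDS hinv' heS a b hends_e.symm ?_⟩
      exact Hop2.hop3 (show Hop2 _ _ b a from Or.inr ⟨c, ⟨f, by exact_mod_cast hfmem, (huf _).trans hf1⟩,
        ⟨g, by exact_mod_cast hgmem, (hug _).trans hg1⟩⟩)
    · -- f = (b,c), g = (a,c) : both into c, e ↦ (b,a), use f's good back path
      refine ⟨insert e S, _, Finset.subset_insert _ _, hemem,
        extend_one hDS hinv' heS b a (Sym2.eq_swap.trans hends_e.symm) ?_⟩
      refine Or.inr (Or.inl ⟨c, ⟨g, by exact_mod_cast hgmem, (hug _).trans hg1⟩, ?_⟩)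
      have h2 := hhop2 f hfD
      rw [hf1] at h2
      exact h2.mono hsubD (hagreeD _)
    · -- f = (c,b), g = (c,a) : both out of c, e ↦ (a,b), use f's good back path
      refine ⟨insert e S, _, Finset.subset_insert _ _, hemem,
        extend_one hDS hinv' heS a b hends_e.symm ?_⟩
      refine Or.inr (Or.inr ⟨c, ?_, ⟨g, by exact_mod_cast hgmem, (hug _).trans hg1⟩⟩)
      have h2 := hhop2 f hfD
      rw [hf1] at h2
      exact h2.mono hsubD (hagreeD _)
    · -- f = (c,b), g = (a,c) : cyclic the other way, e ↦ (b,a)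
      refine ⟨insert e S, _, Finset.subset_insert _ _, hemem,
        extend_one hDS hinv' heS b a (Sym2.eq_swap.trans hends_e.symm) ?_⟩
      exact Hop2.hop3 (show Hop2 _ _ a b from Or.inr ⟨c, ⟨g, by exact_mod_cast hgmem, (hug _).trans hg1⟩,
        ⟨f, by exact_mod_cast hfmem, (huf _).trans hf1⟩⟩)
  · -- g not oriented: orient e and g cyclically with f
    have hge : g ≠ e := fun h => heg h.symm
    have hemem : e ∈ insert e (insert g S) := Finset.mem_insert_self _ _
    have hgmem : g ∈ insert e (insert g S) :=
      Finset.mem_insert_of_mem (Finset.mem_insert_self _ _)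
    have hfmem : f ∈ insert e (insert g S) :=
      Finset.mem_insert_of_mem (Finset.mem_insert_of_mem hfS)
    have hSsub : S ⊆ insert e (insert g S) := fun x hx =>
      Finset.mem_insert_of_mem (Finset.mem_insert_of_mem hx)
    rcases hρf with hf1 | hf1
    · -- f = (b,c) : cycle a→b→c→a, e ↦ (a,b), g ↦ (c,a)
      set ρ' := Function.update (Function.update ρ e (a, b)) g (c, a) with hρ'
      have hρ'e : ρ' e = (a, b) := by
        rw [hρ', Function.update_of_ne hge.symm, Function.update_self]
      have hρ'g : ρ' g = (c, a) := by rw [hρ', Function.update_self]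
      have hρ'f : ρ' f = (b, c) := by
        rw [hρ', Function.update_of_ne hfg, Function.update_of_ne hfe, hf1]
      refine ⟨insert e (insert g S), ρ', hSsub, hemem,
        extend_two hDS hinv' heS hgS hge a b c a hends_e.symm hends_g.symm ?_ ?_⟩
      · exact Hop2.hop3 (show Hop2 _ _ b a from Or.inr ⟨c, ⟨f, by exact_mod_cast hfmem, hρ'f⟩,
          ⟨g, by exact_mod_cast hgmem, hρ'g⟩⟩)
      · exact Hop2.hop3 (show Hop2 _ _ a c from Or.inr ⟨b, ⟨e, by exact_mod_cast hemem, hρ'e⟩,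
          ⟨f, by exact_mod_cast hfmem, hρ'f⟩⟩)
    · -- f = (c,b) : cycle a→c→b→a, e ↦ (b,a), g ↦ (a,c)
      set ρ' := Function.update (Function.update ρ e (b, a)) g (a, c) with hρ'
      have hρ'e : ρ' e = (b, a) := by
        rw [hρ', Function.update_of_ne hge.symm, Function.update_self]
      have hρ'g : ρ' g = (a, c) := by rw [hρ', Function.update_self]
      have hρ'f : ρ' f = (c, b) := by
        rw [hρ', Function.update_of_ne hfg, Function.update_of_ne hfe, hf1]
      refine ⟨insert e (insert g S), ρ', hSsub, hemem,
        extend_two hDS hinv' heS hgS hge b a a c (Sym2.eq_swap.trans hends_e.symm)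
          (Sym2.eq_swap.trans hends_g.symm) ?_ ?_⟩
      · exact Hop2.hop3 (show Hop2 _ _ a b from Or.inr ⟨c, ⟨g, by exact_mod_cast hgmem, hρ'g⟩,
          ⟨f, by exact_mod_cast hfmem, hρ'f⟩⟩)
      · exact Hop2.hop3 (show Hop2 _ _ c a from Or.inr ⟨b, ⟨f, by exact_mod_cast hfmem, hρ'f⟩,
          ⟨e, by exact_mod_cast hemem, hρ'e⟩⟩)

end Phase2

end Multigraph

namespace Multigraph

section Phase2Main

variable {V E : Type*} [Fintype V] [Fintype E]

lemma phase2_par_step [DecidableEq E] {G : Multigraph V E} {D S : Finset E} {ρ : E → V × V}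
    {e e' : E} (hne : e' ≠ e) (hends : G.ends e' = G.ends e) (he'D : e' ∈ D)
    (hDS : D ⊆ S) (heS : e ∉ S) (hinv : Inv G D S ρ) :
    ∃ (S' : Finset E) (ρ' : E → V × V), S ⊆ S' ∧ e ∈ S' ∧ Inv G D S' ρ' := by
  obtain ⟨hcompat, hhop2, hhop3⟩ := hinv
  have hinv' : Inv G D S ρ := ⟨hcompat, hhop2, hhop3⟩
  have he'S : e' ∈ S := hDS he'D
  set p := (ρ e').1
  set q := (ρ e').2
  have hpq : s(p, q) = G.ends e := (hcompat e' he'S).trans hends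
  refine ⟨insert e S, Function.update ρ e (q, p), Finset.subset_insert _ _,
    Finset.mem_insert_self _ _, extend_one hDS hinv' heS q p (Sym2.eq_swap.trans hpq) ?_⟩
  refine Hop2.hop3 (ArcOn.hop2 ⟨e', ?_, ?_⟩)
  · exact_mod_cast Finset.mem_insert_of_mem he'S
  · rw [Function.update_of_ne hne]

lemma phase2_main [DecidableEq E] (G : Multigraph V E) (hsc : ∀ e, G.HasSC e)
    (D : Finset E)
    (hD3 : ∀ e ∉ D, ∀ e', e' ≠ e → G.ends e' = G.ends e → e' ∈ D)
    (hD4 : ∀ e ∉ D, ∀ f g a b c, G.TriData e f g a b c → f ∈ D ∨ g ∈ D) :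
    ∀ (n : ℕ) (S : Finset E) (ρ : E → V × V), D ⊆ S → (Finset.univ \ S).card ≤ n →
      Inv G D S ρ →
      ∃ ρ' : E → V × V, (∀ e, s((ρ' e).1, (ρ' e).2) = G.ends e) ∧
        (∀ e, Hop3 ρ' Set.univ (ρ' e).2 (ρ' e).1) := by
  classical
  intro n
  induction n with
  | zero =>
    intro S ρ hDS hcard hinv
    have hS : S = Finset.univ := by
      have : Finset.univ \ S = ∅ := Finset.card_eq_zero.1 (Nat.le_zero.1 hcard)
      have h2 := Finset.sdiff_union_of_subset (Finset.subset_univ S)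
      rw [this, Finset.empty_union] at h2
      exact h2
    subst hS
    obtain ⟨hcompat, hhop2, hhop3⟩ := hinv
    refine ⟨ρ, fun e => hcompat e (Finset.mem_univ e), fun e => ?_⟩
    have := hhop3 e (Finset.mem_univ e)
    rwa [Finset.coe_univ] at this
  | succ n ih =>
    intro S ρ hDS hcard hinv
    by_cases hS : S = Finset.univ
    · subst hS
      obtain ⟨hcompat, hhop2, hhop3⟩ := hinv
      refine ⟨ρ, fun e => hcompat e (Finset.mem_univ e), fun e => ?_⟩
      have := hhop3 e (Finset.mem_univ e)
      rwa [Finset.coe_univ] at this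
    · obtain ⟨e, heS⟩ : ∃ e, e ∉ S := by
        by_contra h
        push_neg at h
        exact hS (Finset.eq_univ_of_forall h)
      have heD : e ∉ D := fun h => heS (hDS h)
      have hstep : ∃ (S' : Finset E) (ρ' : E → V × V), S ⊆ S' ∧ e ∈ S' ∧ Inv G D S' ρ' := by
        rcases hsc e with ⟨e', hne, hends⟩ | ⟨f, g, a, b, c, htri⟩
        · exact phase2_par_step hne hends (hD3 e heD e' hne hends) hDS heS hinv
        · rcases hD4 e heD f g a b c htri with hf | hg
          · exact phase2_step htri hf hDS heS hinv
          · exact phase2_step (triData_swap htri) hg hDS heS hinv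
      obtain ⟨S', ρ', hSS', heS', hinv'⟩ := hstep
      refine ih S' ρ' (hDS.trans hSS') ?_ hinv'
      have hsub : Finset.univ \ S' ⊆ (Finset.univ \ S).erase e := by
        intro x hx
        rw [Finset.mem_sdiff] at hx
        rw [Finset.mem_erase, Finset.mem_sdiff]
        exact ⟨fun h => hx.2 (h ▸ heS'), hx.1, fun h => hx.2 (hSS' h)⟩
      have h1 := Finset.card_le_card hsub
      have h2 : ((Finset.univ \ S).erase e).card = (Finset.univ \ S).card - 1 :=
        Finset.card_erase_of_mem (Finset.mem_sdiff.2 ⟨Finset.mem_univ e, heS⟩)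
      have h3 : 0 < (Finset.univ \ S).card :=
        Finset.card_pos.2 ⟨e, Finset.mem_sdiff.2 ⟨Finset.mem_univ e, heS⟩⟩
      omega

end Phase2Main

end Multigraph

namespace Multigraph

/-- Phase 1 + Phase 2: a good orientation function. -/
lemma exists_good_orientation {V E : Type*} [Fintype V] [Fintype E] (G : Multigraph V E)
    [Nonempty V] (hsc : ∀ e, G.HasSC e) :
    ∃ ρ : E → V × V, (∀ e, s((ρ e).1, (ρ e).2) = G.ends e) ∧
      ∀ e, Hop3 ρ Set.univ (ρ e).2 (ρ e).1 := by
  classical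
  obtain ⟨D, ρ, h1, h2, h3, h4⟩ := phase1 G
  refine phase2_main G hsc D h3 h4 (Finset.univ \ D).card D ρ subset_rfl le_rfl ⟨h1, h2, ?_⟩
  intro e he
  exact (h2 e he).hop3


end Multigraph

namespace Multigraph

section Glue

variable {V E : Type*} {G : Multigraph V E}

lemma arcOn_iff_dadj (o : G.Orientation) {x y : V} :
    ArcOn o.dir Set.univ x y ↔ o.DAdj x y := by
  constructor
  · rintro ⟨f, -, hf⟩; exact ⟨f, hf⟩
  · rintro ⟨f, hf⟩; exact ⟨f, Set.mem_univ f, hf⟩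

lemma chain_of_arc (o : G.Orientation) {x y : V} (h : ArcOn o.dir Set.univ x y) :
    ∃ l : List V, List.Chain o.DAdj x l ∧ (x :: l).getLast (List.cons_ne_nil x l) = y ∧
      l.length ≤ 1 :=
  ⟨[y], List.Chain.cons ((arcOn_iff_dadj o).1 h) List.Chain.nil, by simp, by simp⟩

lemma chain_of_hop2 (o : G.Orientation) {x y : V} (h : Hop2 o.dir Set.univ x y) :
    ∃ l : List V, List.Chain o.DAdj x l ∧ (x :: l).getLast (List.cons_ne_nil x l) = y ∧
      l.length ≤ 2 := by
  rcases h with h | ⟨z, h1, h2⟩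
  · obtain ⟨l, hc, hl, hlen⟩ := chain_of_arc o h
    exact ⟨l, hc, hl, hlen.trans one_le_two⟩
  · exact ⟨[z, y], List.Chain.cons ((arcOn_iff_dadj o).1 h1)
      (List.Chain.cons ((arcOn_iff_dadj o).1 h2) List.Chain.nil), by simp, by simp⟩

/-- Concatenation of chains. -/
lemma chain_append {R : V → V → Prop} :
    ∀ (l1 : List V) (x y z : V) (l2 : List V), List.Chain R x l1 →
      (x :: l1).getLast (List.cons_ne_nil x l1) = y →
      List.Chain R y l2 → (y :: l2).getLast (List.cons_ne_nil y l2) = z →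
      List.Chain R x (l1 ++ l2) ∧
        (x :: (l1 ++ l2)).getLast (List.cons_ne_nil x _) = z := by
  intro l1
  induction l1 with
  | nil =>
    intro x y z l2 _ hxy h2 hlast
    simp only [List.getLast_singleton] at hxy
    subst hxy
    exact ⟨h2, hlast⟩
  | cons a l ih =>
    intro x y z l2 hchain hxy h2 hlast
    have hchain : R x a ∧ List.Chain R a l := List.isChain_cons_cons.1 hchain
    have hxy' : (a :: l).getLast (List.cons_ne_nil a l) = y := by
      rw [List.getLast_cons (List.cons_ne_nil a l)] at hxy
      exact hxy
    obtain ⟨hc, hl⟩ := ih a y z l2 hchain.2 hxy' h2 hlast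
    refine ⟨(List.isChain_cons_cons (R := R) (a := x) (b := a) (l := l ++ l2)).2 ⟨hchain.1, hc⟩, ?_⟩
    rw [List.cons_append, List.getLast_cons (List.cons_ne_nil a (l ++ l2))]
    exact hl

lemma chain_of_hop3 (o : G.Orientation) {x y : V} (h : Hop3 o.dir Set.univ x y) :
    ∃ l : List V, List.Chain o.DAdj x l ∧ (x :: l).getLast (List.cons_ne_nil x l) = y ∧
      l.length ≤ 3 := by
  rcases h with h | ⟨z, h1, h2⟩ | ⟨z, h1, h2⟩
  · obtain ⟨l, hc, hl, hlen⟩ := chain_of_hop2 o h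
    exact ⟨l, hc, hl, hlen.trans (by norm_num)⟩
  · obtain ⟨l, hc, hl, hlen⟩ := chain_of_hop2 o h2
    refine ⟨z :: l, List.Chain.cons ((arcOn_iff_dadj o).1 h1) hc, ?_, by simp only [List.length_cons]; omega⟩
    rw [List.getLast_cons (List.cons_ne_nil z l)]
    exact hl
  · obtain ⟨l, hc, hl, hlen⟩ := chain_of_hop2 o h1
    obtain ⟨l2, hc2, hl2, hlen2⟩ := chain_of_arc o h2
    obtain ⟨hc3, hl3⟩ := chain_append l x z y l2 hc hl hc2 hl2
    exact ⟨l ++ l2, hc3, hl3, by simpa using Nat.add_le_add hlen hlen2⟩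

end Glue

end Multigraph

namespace Multigraph

section Glue2

variable {V E : Type*} {G : Multigraph V E}

/-- A good orientation: each arc has a back path of length at most 3. -/
def IsGoodOrientation (o : G.Orientation) : Prop :=
  ∀ e, Hop3 o.dir Set.univ (o.dir e).2 (o.dir e).1

lemma chain_of_adj {o : G.Orientation} (ho : IsGoodOrientation o) {u v : V}
    (h : G.toSimple.Adj u v) :
    ∃ l : List V, List.Chain o.DAdj u l ∧ (u :: l).getLast (List.cons_ne_nil u l) = v ∧
      l.length ≤ 3 := by
  obtain ⟨hne, e, he⟩ := h
  have hcompat := o.compat e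
  rw [he] at hcompat
  rcases Sym2.eq_iff.1 hcompat with ⟨h1, h2⟩ | ⟨h1, h2⟩
  · -- arc u → v
    refine ⟨[v], List.Chain.cons ⟨e, ?_⟩ List.Chain.nil, by simp, by simp⟩
    rw [← h1, ← h2]
  · -- arc v → u, use the back path
    have h3 := ho e
    rw [h1, h2] at h3
    exact chain_of_hop3 o h3

lemma chain_of_walk {o : G.Orientation} (ho : IsGoodOrientation o) {u v : V}
    (p : G.toSimple.Walk u v) :
    ∃ l : List V, List.Chain o.DAdj u l ∧ (u :: l).getLast (List.cons_ne_nil u l) = v ∧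
      l.length ≤ 3 * p.length := by
  induction p with
  | nil => exact ⟨[], List.Chain.nil, by simp, by simp⟩
  | @cons x w y hadj q ih =>
    obtain ⟨l1, hc1, hl1, hlen1⟩ := chain_of_adj ho hadj
    obtain ⟨l2, hc2, hl2, hlen2⟩ := ih
    obtain ⟨hc3, hl3⟩ := chain_append l1 x w y l2 hc1 hl1 hc2 hl2
    refine ⟨l1 ++ l2, hc3, hl3, ?_⟩
    rw [List.length_append, SimpleGraph.Walk.length_cons]
    omega

lemma ddist_le_of_chain (o : G.Orientation) {x y : V} {l : List V}
    (hc : List.Chain o.DAdj x l) (hl : (x :: l).getLast (List.cons_ne_nil x l) = y) :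
    o.ddist x y ≤ (l.length : ℕ∞) :=
  sInf_le ⟨l, hc, hl, rfl⟩

end Glue2

end Multigraph
/-- Let `G` be a finite connected bridgeless graph (parallel edges allowed)
with diameter `d` and maximum edge girth `g*(G) = 3` (i.e. every edge either has a parallel
edge or lies in a triangle). Then `G` admits a strong orientation of diameter at most `3d`. -/
theorem stmt1 {V E : Type*} [Fintype V] [Fintype E] (G : Multigraph V E)
    (hconn : G.toSimple.Connected) (hbridgeless : G.Bridgeless)
    (d : ℕ) (hdiam : G.diam = d)
    (hg : G.maxEdgeGirth = 3) :
    ∃ o : G.Orientation, o.IsStrong ∧ o.odiam ≤ ((3 * d : ℕ) : ℕ∞) := by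
  haveI : Nonempty V := hconn.nonempty
  obtain ⟨ρ, hcompat, hhop⟩ := Multigraph.exists_good_orientation G
    (fun e => Multigraph.hasSC_of_bridgeless G hbridgeless hg e)
  refine ⟨⟨ρ, hcompat⟩, ?_⟩
  set o : G.Orientation := ⟨ρ, hcompat⟩ with ho
  have hgood : Multigraph.IsGoodOrientation o := hhop
  have key : ∀ x y : V, o.ddist x y ≤ ((3 * d : ℕ) : ℕ∞) := by
    intro x y
    obtain ⟨p, hp⟩ := hconn.exists_walk_length_eq_dist x y
    obtain ⟨l, hc, hl, hlen⟩ := Multigraph.chain_of_walk hgood p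
    have h1 : o.ddist x y ≤ (l.length : ℕ∞) := Multigraph.ddist_le_of_chain o hc hl
    have hdxy : G.dist x y ≤ d := by
      have hmem : G.dist x y ∈ {n | ∃ a b, G.dist a b = n} := ⟨x, y, rfl⟩
      have heq : {n | ∃ a b : V, G.dist a b = n} =
          Set.range (fun q : V × V => G.dist q.1 q.2) := by
        ext n
        constructor
        · rintro ⟨a, b, h⟩; exact ⟨(a, b), h⟩
        · rintro ⟨⟨a, b⟩, h⟩; exact ⟨a, b, h⟩
      have hbdd : BddAbove {n | ∃ a b : V, G.dist a b = n} := by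
        rw [heq]; exact (Set.finite_range _).bddAbove
      have := le_csSup hbdd hmem
      rwa [← Multigraph.diam, hdiam] at this
    have h2 : l.length ≤ 3 * d := by
      have : p.length ≤ d := by rw [hp]; exact hdxy
      omega
    exact h1.trans (by exact_mod_cast h2)
  constructor
  · intro x y
    exact ne_top_of_le_ne_top (ENat.coe_ne_top (3 * d)) (key x y)
  · exact iSup_le fun x => iSup_le fun y => key x y
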